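/- For any finite simple graph G, if the family Ψ(G) of local maximum stable sets of G satisfies the accessibility property, then it also satisfies the exchange property; hence (V(G), Ψ(G)) is a greedoid. -/

import Mathlib

open Finset

variable {V : Type*}

/-- A stable (independent) set of vertices. -/
def StableSet (G : SimpleGraph V) (S : Finset V) : Prop :=
  ∀ x ∈ S, ∀ y ∈ S, ¬ G.Adj x y

/-- The closed neighborhood N[S] of a finite vertex set. -/
def closedNbhd [Fintype V] [DecidableEq V] (G : SimpleGraph V) [DecidableRel G.Adj]
    (S : Finset V) : Finset V :=
  S ∪ Finset.univ.filter (fun v => ∃ s ∈ S, G.Adj v s)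

/-- Ψ(G): the family of local maximum stable sets of `G`:
stable sets `S` that are maximum stable sets of the subgraph induced by `N[S]`. -/
def Psi [Fintype V] [DecidableEq V] (G : SimpleGraph V) [DecidableRel G.Adj] :
    Set (Finset V) :=
  {S | StableSet G S ∧
    ∀ T : Finset V, T ⊆ closedNbhd G S → StableSet G T → T.card ≤ S.card}

/-- A maximum stable set of `G`. -/
def MaximumStable (G : SimpleGraph V) (S : Finset V) : Prop :=
  StableSet G S ∧ ∀ T : Finset V, StableSet G T → T.card ≤ S.card

/-- The accessibility property of a set system. -/
def Accessible [DecidableEq V] (F : Set (Finset V)) : Prop :=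
  ∀ X ∈ F, X.Nonempty → ∃ x ∈ X, X.erase x ∈ F

/-- The exchange property of a set system. -/
def ExchangeProp [DecidableEq V] (F : Set (Finset V)) : Prop :=
  ∀ X ∈ F, ∀ Y ∈ F, X.card = Y.card + 1 → ∃ x ∈ X, x ∉ Y ∧ insert x Y ∈ F

/-- A greedoid: a nonempty set system satisfying accessibility and exchange. -/
def IsGreedoid [DecidableEq V] (F : Set (Finset V)) : Prop :=
  F.Nonempty ∧ Accessible F ∧ ExchangeProp F

/-- An accessibility chain for `S`: sets `f 1 ⊆ f 2 ⊆ ... ⊆ f |S| = S`,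
with `|f j| = j` and each `f j ∈ Ψ(G)`. -/
def HasAccessChain [Fintype V] [DecidableEq V] (G : SimpleGraph V) [DecidableRel G.Adj]
    (S : Finset V) : Prop :=
  ∃ f : ℕ → Finset V, f S.card = S ∧
    (∀ j, 1 ≤ j → j ≤ S.card → (f j).card = j ∧ f j ∈ Psi G) ∧
    (∀ j, 1 ≤ j → j < S.card → f j ⊆ f (j + 1))

/-- A matching `M` is uniquely restricted if it is the unique perfect matching of the
subgraph induced by the set of vertices it saturates. -/
def UniquelyRestricted (G : SimpleGraph V) (M : G.Subgraph) : Prop :=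
  M.IsMatching ∧ ∀ M' : G.Subgraph, M'.IsMatching → M'.support = M.support →
    M'.edgeSet = M.edgeSet

/-- A maximum matching: a matching of maximum cardinality. -/
def MaximumMatching (G : SimpleGraph V) (M : G.Subgraph) : Prop :=
  M.IsMatching ∧ ∀ M' : G.Subgraph, M'.IsMatching → M'.edgeSet.ncard ≤ M.edgeSet.ncard

/-- A cycle `c` is alternating with respect to the matching `M` if of any two incident
edges of `c` exactly one belongs to `M`. -/
def AlternatingCycle (G : SimpleGraph V) (M : G.Subgraph) {v : V} (c : G.Walk v v) : Prop :=
  c.IsCycle ∧ ∀ i : Fin c.edges.length,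
    (c.edges.get i ∈ M.edgeSet ↔
      c.edges.get ⟨(i.1 + 1) % c.edges.length,
        Nat.mod_lt _ (lt_of_le_of_lt (Nat.zero_le _) i.2)⟩ ∉ M.edgeSet)

/-- A unicyclic graph: it has a cycle, and all of its cycles have the same edge set. -/
def Unicyclic [DecidableEq V] (G : SimpleGraph V) : Prop :=
  (∃ (v : V) (c : G.Walk v v), c.IsCycle) ∧
  ∀ ⦃v : V⦄ (c : G.Walk v v) ⦃w : V⦄ (d : G.Walk w w), c.IsCycle → d.IsCycle →
    c.edges.toFinset = d.edges.toFinset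

/-- The stability number α(G). -/
noncomputable def alphaNum (G : SimpleGraph V) : ℕ :=
  sSup {n | ∃ S : Finset V, StableSet G S ∧ S.card = n}

/-- The matching number μ(G). -/
noncomputable def muNum (G : SimpleGraph V) : ℕ :=
  sSup {n | ∃ M : G.Subgraph, M.IsMatching ∧ M.edgeSet.ncard = n}

/-- A König–Egerváry graph: α(G) + μ(G) = |V(G)|. -/
def KonigEgervary (G : SimpleGraph V) [Fintype V] : Prop :=
  alphaNum G + muNum G = Fintype.card V


section Aux

variable [Fintype V] [DecidableEq V] (G : SimpleGraph V) [DecidableRel G.Adj]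

lemma mem_closedNbhd_iff (S : Finset V) (v : V) :
    v ∈ closedNbhd G S ↔ v ∈ S ∨ ∃ s ∈ S, G.Adj v s := by
  simp [closedNbhd]

lemma subset_closedNbhd (S : Finset V) : S ⊆ closedNbhd G S := by
  intro v hv; rw [mem_closedNbhd_iff]; exact Or.inl hv

lemma closedNbhd_mono {A B : Finset V} (h : A ⊆ B) : closedNbhd G A ⊆ closedNbhd G B := by
  intro v hv
  rw [mem_closedNbhd_iff] at hv ⊢
  rcases hv with hv | ⟨s, hs, hadj⟩
  · exact Or.inl (h hv)
  · exact Or.inr ⟨s, h hs, hadj⟩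

lemma stableSet_subset {S T : Finset V} (h : StableSet G S) (hTS : T ⊆ S) : StableSet G T :=
  fun x hx y hy => h x (hTS hx) y (hTS hy)

lemma empty_mem_Psi : (∅ : Finset V) ∈ Psi G := by
  constructor
  · intro x hx; simp at hx
  · intro T hT _
    have : T = ∅ := by
      apply Finset.subset_empty.mp
      intro v hv
      have := hT hv
      rw [mem_closedNbhd_iff] at this
      simp at this
    simp [this]

/-- The key lemma: if `Y ∈ Ψ`, `insert x A ∈ Ψ` with `A ⊆ N[Y]` and `x ∉ N[Y]`,
then `insert x Y ∈ Ψ`. -/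
lemma key_lemma {Y A : Finset V} {x : V} (hY : Y ∈ Psi G) (hZ : insert x A ∈ Psi G)
    (hA : A ⊆ closedNbhd G Y) (hx : x ∉ closedNbhd G Y) (hxA : x ∉ A) :
    insert x Y ∈ Psi G := by
  have hxY : x ∉ Y := fun h => hx (subset_closedNbhd G Y h)
  have hxadj : ∀ s ∈ Y, ¬ G.Adj x s := by
    intro s hs hadj
    exact hx ((mem_closedNbhd_iff G Y x).mpr (Or.inr ⟨s, hs, hadj⟩))
  constructor
  · -- stability
    intro u hu v hv hadj
    rcases Finset.mem_insert.mp hu with hu' | hu'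
    · rcases Finset.mem_insert.mp hv with hv' | hv'
      · rw [hu', hv'] at hadj; exact G.loopless.irrefl x hadj
      · rw [hu'] at hadj; exact hxadj v hv' hadj
    · rcases Finset.mem_insert.mp hv with hv' | hv'
      · rw [hv'] at hadj; exact hxadj u hu' hadj.symm
      · exact hY.1 u hu' v hv' hadj
  · intro T hT hTstab
    set U := T ∩ closedNbhd G Y with hU
    set W := T \ closedNbhd G Y with hW
    set C := U ∩ closedNbhd G A with hC
    -- W ⊆ N[insert x A]
    have hWsub : W ⊆ closedNbhd G (insert x A) := by
      intro w hw
      have hwT : w ∈ T := (Finset.mem_sdiff.mp hw).1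
      have hwN : w ∉ closedNbhd G Y := (Finset.mem_sdiff.mp hw).2
      have := hT hwT
      rw [mem_closedNbhd_iff] at this
      rcases this with hmem | ⟨s, hs, hadj⟩
      · rcases Finset.mem_insert.mp hmem with rfl | hmem
        · exact subset_closedNbhd G _ (Finset.mem_insert_self _ _)
        · exact absurd (subset_closedNbhd G Y hmem) hwN
      · rcases Finset.mem_insert.mp hs with rfl | hs
        · exact (mem_closedNbhd_iff G _ w).mpr (Or.inr ⟨s, Finset.mem_insert_self _ _, hadj⟩)
        · exact absurd ((mem_closedNbhd_iff G Y w).mpr (Or.inr ⟨s, hs, hadj⟩)) hwN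
    -- first estimate : |W| + |C| ≤ |A| + 1
    have hWC_sub : W ∪ C ⊆ closedNbhd G (insert x A) := by
      apply Finset.union_subset hWsub
      intro c hc
      exact closedNbhd_mono G (Finset.subset_insert x A) (Finset.mem_inter.mp hc).2
    have hWC_stab : StableSet G (W ∪ C) := by
      apply stableSet_subset G hTstab
      apply Finset.union_subset (Finset.sdiff_subset)
      exact (Finset.inter_subset_left).trans (Finset.inter_subset_left)
    have hWC_card : (W ∪ C).card = W.card + C.card := by
      apply Finset.card_union_of_disjoint
      apply Finset.disjoint_left.mpr
      intro v hv hvC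
      exact (Finset.mem_sdiff.mp hv).2 (Finset.mem_inter.mp (Finset.mem_inter.mp hvC).1).2
    have est1 : W.card + C.card ≤ A.card + 1 := by
      have := hZ.2 (W ∪ C) hWC_sub hWC_stab
      rw [hWC_card] at this
      have hcard : (insert x A).card = A.card + 1 := Finset.card_insert_of_notMem hxA
      omega
    -- second estimate : |A| + |U \ N[A]| ≤ |Y|
    have hAU_sub : A ∪ (U \ closedNbhd G A) ⊆ closedNbhd G Y := by
      apply Finset.union_subset hA
      intro u hu
      exact (Finset.mem_inter.mp (Finset.mem_sdiff.mp hu).1).2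
    have hAU_stab : StableSet G (A ∪ (U \ closedNbhd G A)) := by
      intro u hu v hv
      rcases Finset.mem_union.mp hu with hu | hu
      · rcases Finset.mem_union.mp hv with hv | hv
        · exact hZ.1 u (Finset.mem_insert_of_mem hu) v (Finset.mem_insert_of_mem hv)
        · intro hadj
          exact (Finset.mem_sdiff.mp hv).2
            ((mem_closedNbhd_iff G A v).mpr (Or.inr ⟨u, hu, hadj.symm⟩))
      · rcases Finset.mem_union.mp hv with hv | hv
        · intro hadj
          exact (Finset.mem_sdiff.mp hu).2
            ((mem_closedNbhd_iff G A u).mpr (Or.inr ⟨v, hv, hadj⟩))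
        · exact hTstab u (Finset.mem_inter.mp (Finset.mem_sdiff.mp hu).1).1 v
            (Finset.mem_inter.mp (Finset.mem_sdiff.mp hv).1).1
    have hAU_card : (A ∪ (U \ closedNbhd G A)).card = A.card + (U \ closedNbhd G A).card := by
      apply Finset.card_union_of_disjoint
      apply Finset.disjoint_left.mpr
      intro v hv hv'
      exact (Finset.mem_sdiff.mp hv').2 (subset_closedNbhd G A hv)
    have est2 : A.card + (U \ closedNbhd G A).card ≤ Y.card := by
      have := hY.2 _ hAU_sub hAU_stab
      rw [hAU_card] at this
      exact this
    -- splitting cards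
    have hsplit1 : U.card + W.card = T.card := Finset.card_inter_add_card_sdiff T (closedNbhd G Y)
    have hsplit2 : C.card + (U \ closedNbhd G A).card = U.card :=
      Finset.card_inter_add_card_sdiff U (closedNbhd G A)
    have hins : (insert x Y).card = Y.card + 1 := Finset.card_insert_of_notMem hxY
    omega

/-- From accessibility: any `X ∈ Ψ` not inside `N[Y]` yields `A ⊆ N[Y]`, `x ∈ X \ N[Y]`
with `insert x A ∈ Ψ`. -/
lemma descent (h : Accessible (Psi G)) (Y : Finset V) :
    ∀ X : Finset V, X ∈ Psi G → ¬ (X ⊆ closedNbhd G Y) →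
      ∃ A x, A ⊆ closedNbhd G Y ∧ x ∈ X ∧ x ∉ closedNbhd G Y ∧ x ∉ A ∧
        insert x A ∈ Psi G := by
  intro X
  induction X using Finset.strongInduction with
  | _ X ih =>
    intro hX hXN
    have hXne : X.Nonempty := by
      rcases Finset.eq_empty_or_nonempty X with rfl | hne
      · exact absurd (Finset.empty_subset _) hXN
      · exact hne
    obtain ⟨z, hz, hz'⟩ := h X hX hXne
    by_cases hsub : X.erase z ⊆ closedNbhd G Y
    · obtain ⟨x, hxX, hxN⟩ := Finset.not_subset.mp hXN
      have hxz : x = z := by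
        by_contra hne
        exact hxN (hsub (Finset.mem_erase.mpr ⟨hne, hxX⟩))
      subst hxz
      refine ⟨X.erase x, x, hsub, hxX, hxN, Finset.notMem_erase x X, ?_⟩
      rwa [Finset.insert_erase hxX]
    · obtain ⟨A, x, hA, hxX, hxN, hxA, hZ⟩ :=
        ih (X.erase z) (Finset.erase_ssubset hz) hz' hsub
      exact ⟨A, x, hA, Finset.mem_of_mem_erase hxX, hxN, hxA, hZ⟩

end Aux

/-- If Ψ(G) satisfies accessibility, then it satisfies exchange, hence is a greedoid. -/
theorem psi_accessible_implies_exchange [Fintype V] [DecidableEq V] (G : SimpleGraph V)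
    [DecidableRel G.Adj] (h : Accessible (Psi G)) :
    ExchangeProp (Psi G) ∧ IsGreedoid (Psi G) := by
  have hex : ExchangeProp (Psi G) := by
    intro X hX Y hY hcard
    have hXN : ¬ (X ⊆ closedNbhd G Y) := by
      intro hsub
      have : X.card ≤ Y.card :=
        hY.2 X hsub hX.1
      omega
    obtain ⟨A, x, hA, hxX, hxN, hxA, hZ⟩ := descent G h Y X hX hXN
    refine ⟨x, hxX, fun hxY => hxN (subset_closedNbhd G Y hxY), ?_⟩
    exact key_lemma G hY hZ hA hxN hxA
  exact ⟨hex, ⟨∅, empty_mem_Psi G⟩, h, hex⟩
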